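/- Let rho > 0 and mu >= 0 be constants, let A : R x R -> R, (x,p) -> A(x,p), be continuously differentiable, and let P, Q be continuously differentiable real functions on an open subset of R^2 such that A(x, P(x,t)) > 0 and (dA/dp)(x, P(x,t)) != 0 at every point. Suppose P and Q satisfy the conservation and momentum equations dQ/dx + d/dt[ A(x, P(x,t)) ] = 0 and dQ/dt + d/dx[ Q^2 / A(x, P(x,t)) ] = -(A/rho) dP/dx - 8 pi mu Q / (rho A), where A and its partial derivatives are evaluated at (x, P(x,t)). Then P and Q satisfy dP/dt + a dQ/dx = 0 and dQ/dt + b dP/dx + 2c dQ/dx = g, with a = 1/A_p, b = A/rho - Q^2 A_p / A^2, c = Q/A, and g = Q^2 A_x / A^2 - 8 pi mu Q / (rho A), where A_p = (dA/dp)(x, P(x,t)) and A_x = (dA/dx)(x, P(x,t)). -/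

import Mathlib

/-- The blood-flow model (conservation of mass and Navier–Stokes momentum with
a pressure-dependent cross-sectional area `A(x,P)`) is a special case of the
general first-order system `P_t + a Q_x = f`, `Q_t + b P_x + 2c Q_x = g` with
`f = 0`, `a = 1/A_p`, `b = A/ρ - Q² A_p/A²`, `c = Q/A`, and
`g = Q² A_x/A² - 8πμQ/(ρA)`. -/
theorem blood_flow_model_is_special_case
    (ρ mu : ℝ) (hρ : 0 < ρ) (hmu : 0 ≤ mu)
    (A : ℝ → ℝ → ℝ) (hA : ContDiff ℝ 1 fun z : ℝ × ℝ => A z.1 z.2)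
    (Ω : Set (ℝ × ℝ)) (hΩ : IsOpen Ω)
    (P Q : ℝ → ℝ → ℝ)
    (hP : ∀ z ∈ Ω, DifferentiableAt ℝ (fun w : ℝ × ℝ => P w.1 w.2) z)
    (hQ : ∀ z ∈ Ω, DifferentiableAt ℝ (fun w : ℝ × ℝ => Q w.1 w.2) z)
    (hApos : ∀ x t : ℝ, (x, t) ∈ Ω → 0 < A x (P x t))
    (hAp : ∀ x t : ℝ, (x, t) ∈ Ω → deriv (A x) (P x t) ≠ 0)
    (hmass : ∀ x t : ℝ, (x, t) ∈ Ω →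
      deriv (fun y => Q y t) x + deriv (fun s => A x (P x s)) t = 0)
    (hmom : ∀ x t : ℝ, (x, t) ∈ Ω →
      deriv (fun s => Q x s) t + deriv (fun y => (Q y t) ^ 2 / A y (P y t)) x =
        -(A x (P x t) / ρ) * deriv (fun y => P y t) x
          - 8 * Real.pi * mu * Q x t / (ρ * A x (P x t))) :
    ∀ x t : ℝ, (x, t) ∈ Ω →
      (deriv (fun s => P x s) t
          + (1 / deriv (A x) (P x t)) * deriv (fun y => Q y t) x = 0) ∧
      (deriv (fun s => Q x s) t
          + (A x (P x t) / ρ - (Q x t) ^ 2 * deriv (A x) (P x t) / (A x (P x t)) ^ 2)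
              * deriv (fun y => P y t) x
          + 2 * (Q x t / A x (P x t)) * deriv (fun y => Q y t) x
        = (Q x t) ^ 2 * deriv (fun y => A y (P x t)) x / (A x (P x t)) ^ 2
            - 8 * Real.pi * mu * Q x t / (ρ * A x (P x t))) := by

  intro x t hx
  have hF : Differentiable ℝ (fun z : ℝ × ℝ => A z.1 z.2) := hA.differentiable one_ne_zero
  have hFd : HasFDerivAt (fun z : ℝ × ℝ => A z.1 z.2)
      (fderiv ℝ (fun z : ℝ × ℝ => A z.1 z.2) (x, P x t)) (x, P x t) :=
    (hF (x, P x t)).hasFDerivAt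
  set φ := fderiv ℝ (fun z : ℝ × ℝ => A z.1 z.2) (x, P x t) with hφ
  -- derivatives of P and Q in each variable
  have hPxd : DifferentiableAt ℝ (fun y => P y t) x :=
    by have := (hP (x, t) hx).comp x (differentiableAt_id.prodMk (differentiableAt_const t) : DifferentiableAt ℝ (fun y : ℝ => (id y, t)) x); exact this
  have hPtd : DifferentiableAt ℝ (fun s => P x s) t :=
    by have := (hP (x, t) hx).comp t ((differentiableAt_const x).prodMk differentiableAt_id); exact this
  have hQxd : DifferentiableAt ℝ (fun y => Q y t) x :=
    by have := (hQ (x, t) hx).comp x (differentiableAt_id.prodMk (differentiableAt_const t) : DifferentiableAt ℝ (fun y : ℝ => (id y, t)) x); exact this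
  have hQtd : DifferentiableAt ℝ (fun s => Q x s) t :=
    by have := (hQ (x, t) hx).comp t ((differentiableAt_const x).prodMk differentiableAt_id); exact this
  have hPx := hPxd.hasDerivAt
  have hPt := hPtd.hasDerivAt
  have hQx := hQxd.hasDerivAt
  have hQt := hQtd.hasDerivAt
  -- partial derivatives of A
  have hgx : HasDerivAt (fun y : ℝ => (y, P x t)) ((1 : ℝ), (0 : ℝ)) x :=
    (hasDerivAt_id x).prodMk (hasDerivAt_const x (P x t))
  have hAx : HasDerivAt (fun y => A y (P x t)) (φ (1, 0)) x :=
    by have := hFd.comp_hasDerivAt x hgx; exact this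
  have hgp : HasDerivAt (fun s : ℝ => (x, s)) ((0 : ℝ), (1 : ℝ)) (P x t) :=
    (hasDerivAt_const (P x t) x).prodMk (hasDerivAt_id (P x t))
  have hApd : HasDerivAt (A x) (φ (0, 1)) (P x t) :=
    hFd.comp_hasDerivAt (P x t) hgp
  have hApval : deriv (A x) (P x t) = φ (0, 1) := hApd.deriv
  have hAxval : deriv (fun y => A y (P x t)) x = φ (1, 0) := hAx.deriv
  -- t-derivative of the composite A x (P x s)
  have hAt : HasDerivAt (fun s => A x (P x s))
      (deriv (fun s => P x s) t * φ (0, 1)) t := by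
    have hg : HasDerivAt (fun s => (x, P x s)) ((0 : ℝ), deriv (fun s => P x s) t) t :=
      (hasDerivAt_const t x).prodMk hPt
    have h := hFd.comp_hasDerivAt t hg
    have h2 : φ (0, deriv (fun s => P x s) t) = deriv (fun s => P x s) t * φ (0, 1) := by
      have e : ((0 : ℝ), deriv (fun s => P x s) t)
          = deriv (fun s => P x s) t • ((0 : ℝ), (1 : ℝ)) := by simp
      rw [e, map_smul, smul_eq_mul]
    rw [h2] at h
    exact h
  -- x-derivative of the composite A y (P y t)
  have hvx : HasDerivAt (fun y => A y (P y t))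
      (φ (1, 0) + deriv (fun y => P y t) x * φ (0, 1)) x := by
    have hg : HasDerivAt (fun y => (y, P y t)) ((1 : ℝ), deriv (fun y => P y t) x) x :=
      (hasDerivAt_id x).prodMk hPx
    have h := hFd.comp_hasDerivAt x hg
    have h2 : φ (1, deriv (fun y => P y t) x)
        = φ (1, 0) + deriv (fun y => P y t) x * φ (0, 1) := by
      have e : ((1 : ℝ), deriv (fun y => P y t) x)
          = ((1 : ℝ), (0 : ℝ)) + deriv (fun y => P y t) x • ((0 : ℝ), (1 : ℝ)) := by simp
      rw [e, map_add, map_smul, smul_eq_mul]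
    rw [h2] at h
    exact h
  have hApos' := hApos x t hx
  have hAne : A x (P x t) ≠ 0 := hApos'.ne'
  -- x-derivative of the quotient Q² / A
  have hquot : HasDerivAt (fun y => (Q y t) ^ 2 / A y (P y t))
      (((2 : ℕ) * Q x t ^ 1 * deriv (fun y => Q y t) x * A x (P x t)
          - (Q x t) ^ 2 * (φ (1, 0) + deriv (fun y => P y t) x * φ (0, 1)))
        / (A x (P x t)) ^ 2) x :=
    (hQx.pow 2).div hvx hAne
  have hmass' := hmass x t hx
  have hmom' := hmom x t hx
  rw [hAt.deriv] at hmass'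
  rw [hquot.deriv] at hmom'
  rw [hApval, hAxval]
  have hApne : φ (0, 1) ≠ 0 := hApval ▸ hAp x t hx
  have hρne : ρ ≠ 0 := hρ.ne'
  constructor
  · have hQxeq : deriv (fun y => Q y t) x = -(deriv (fun s => P x s) t * φ (0, 1)) := by
      linarith
    rw [hQxeq]
    field_simp
    ring
  · have hQteq : deriv (fun s => Q x s) t =
        (-(A x (P x t) / ρ) * deriv (fun y => P y t) x
            - 8 * Real.pi * mu * Q x t / (ρ * A x (P x t)))
          - ((2 : ℕ) * Q x t ^ 1 * deriv (fun y => Q y t) x * A x (P x t)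
              - (Q x t) ^ 2 * (φ (1, 0) + deriv (fun y => P y t) x * φ (0, 1)))
            / (A x (P x t)) ^ 2 := by
      push_cast at hmom' ⊢
      linarith
    rw [hQteq]
    push_cast
    field_simp
    ring
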